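/- Let a, b, c, d lie in positive order on the unit circle. Set d1 := 2·artanh(√((|a−b|·|c−d|)/(|a−c|·|b−d|))) and d2 := 2·artanh(√((|a−d|·|b−c|)/(|a−c|·|b−d|))). Then d1·d2 ≤ (2·log(√2 + 1))², with equality if and only if the absolute cross ratio (|a−c|·|b−d|)/(|a−b|·|c−d|) equals 2. -/

import Mathlib

open Complex

/-- Points `a, b, c, d` lie in positive order on the unit circle. -/
def PosOrderOnCircle (a b c d : ℂ) : Prop :=
  ∃ θ₁ θ₂ θ₃ θ₄ : ℝ, θ₁ < θ₂ ∧ θ₂ < θ₃ ∧ θ₃ < θ₄ ∧ θ₄ < θ₁ + 2 * Real.pi ∧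
    a = Complex.exp (θ₁ * Complex.I) ∧ b = Complex.exp (θ₂ * Complex.I) ∧
    c = Complex.exp (θ₃ * Complex.I) ∧ d = Complex.exp (θ₄ * Complex.I)

/-- The inverse hyperbolic tangent. -/
noncomputable def artanh (x : ℝ) : ℝ := Real.log ((1 + x) / (1 - x)) / 2

section Aux

open Real Set

/-! ### Chord length -/

lemma chordAbs {θ ψ : ℝ} (h1 : θ < ψ) (h2 : ψ < θ + 2*Real.pi) :
    ‖Complex.exp (θ*Complex.I) - Complex.exp (ψ*Complex.I)‖
      = 2 * Real.sin ((ψ-θ)/2) := by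
  have key : Complex.exp (θ*Complex.I) - Complex.exp (ψ*Complex.I)
      = Complex.exp ((((θ+ψ)/2 : ℝ))*Complex.I) *
        (Complex.exp ((((θ-ψ)/2 : ℝ))*Complex.I) - Complex.exp ((((ψ-θ)/2 : ℝ))*Complex.I)) := by
    rw [mul_sub, ← Complex.exp_add, ← Complex.exp_add]
    push_cast
    ring_nf
  rw [key, norm_mul, Complex.norm_exp_ofReal_mul_I, one_mul]
  have e1 : Complex.exp ((((θ-ψ)/2 : ℝ))*Complex.I) - Complex.exp ((((ψ-θ)/2 : ℝ))*Complex.I)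
      = -(2 * Real.sin ((ψ-θ)/2)) * Complex.I := by
    rw [Complex.exp_mul_I, Complex.exp_mul_I]
    rw [show (((θ-ψ)/2 : ℝ) : ℂ) = -(((ψ-θ)/2 : ℝ) : ℂ) by push_cast; ring]
    rw [Complex.cos_neg, Complex.sin_neg]
    rw [← Complex.ofReal_sin]
    push_cast
    ring
  rw [e1]
  rw [norm_mul, Complex.norm_I, mul_one, norm_neg]
  have hs : 0 ≤ Real.sin ((ψ-θ)/2) := by
    apply Real.sin_nonneg_of_nonneg_of_le_pi <;> nlinarith [Real.pi_pos]
  rw [norm_mul, Complex.norm_two, Complex.norm_real, Real.norm_of_nonneg hs]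

/-! ### Ptolemy (sine form) -/

lemma ptolemy_sin (x y z : ℝ) :
    Real.sin (x+y) * Real.sin (y+z)
      = Real.sin x * Real.sin z + Real.sin (x+y+z) * Real.sin y := by
  rw [show x+y+z = (x+y)+z by ring, Real.sin_add (x+y) z, Real.sin_add x y,
    Real.sin_add y z, Real.cos_add x y]
  linear_combination (Real.sin x * Real.sin z) * (Real.sin_sq_add_cos_sq y)

/-! ### Strict convexity of `x ↦ log (sinh (exp x))` -/

noncomputable def psiF : ℝ → ℝ := fun t => t * Real.cosh t / Real.sinh t
noncomputable def phiF : ℝ → ℝ := fun x => Real.log (Real.sinh (Real.exp x))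

lemma psiF_hasDerivAt {t : ℝ} (ht : 0 < t) :
    HasDerivAt psiF ((Real.cosh t * Real.sinh t - t) / (Real.sinh t)^2) t := by
  have hs : Real.sinh t ≠ 0 := ne_of_gt (Real.sinh_pos_iff.2 ht)
  have h1 : HasDerivAt (fun t : ℝ => t * Real.cosh t)
      (1 * Real.cosh t + t * Real.sinh t) t :=
    (hasDerivAt_id t).mul (Real.hasDerivAt_cosh t)
  have h2 := h1.div (Real.hasDerivAt_sinh t) hs
  refine h2.congr_deriv ?_
  have hc : Real.cosh t ^ 2 = Real.sinh t ^ 2 + 1 := Real.cosh_sq t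
  congr 1
  linear_combination (-t) * hc

lemma psiF_strictMonoOn : StrictMonoOn psiF (Set.Ioi 0) := by
  apply strictMonoOn_of_deriv_pos (convex_Ioi 0)
  · apply ContinuousOn.div
    · fun_prop
    · fun_prop
    · intro t ht
      exact ne_of_gt (Real.sinh_pos_iff.2 ht)
  · intro t ht
    rw [interior_Ioi] at ht
    rw [(psiF_hasDerivAt ht).deriv]
    apply div_pos
    · nlinarith [Real.self_lt_sinh_iff.2 ht, Real.one_le_cosh t, Real.sinh_pos_iff.2 ht]
    · have := Real.sinh_pos_iff.2 ht
      positivity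

lemma sinh_exp_pos (x : ℝ) : 0 < Real.sinh (Real.exp x) := Real.sinh_pos_iff.2 (Real.exp_pos x)

lemma phiF_hasDerivAt (x : ℝ) : HasDerivAt phiF (psiF (Real.exp x)) x := by
  have h1 : HasDerivAt Real.exp (Real.exp x) x := Real.hasDerivAt_exp x
  have h2 : HasDerivAt Real.sinh (Real.cosh (Real.exp x)) (Real.exp x) := Real.hasDerivAt_sinh _
  have h3 : HasDerivAt Real.log (Real.sinh (Real.exp x))⁻¹ (Real.sinh (Real.exp x)) :=
    Real.hasDerivAt_log (ne_of_gt (sinh_exp_pos x))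
  have := (h3.comp x (h2.comp x h1))
  exact this.congr_deriv (by unfold psiF; ring)

lemma phiF_deriv : deriv phiF = fun x => psiF (Real.exp x) :=
  funext fun x => (phiF_hasDerivAt x).deriv

lemma phiF_strictConvex : StrictConvexOn ℝ univ phiF := by
  apply StrictMono.strictConvexOn_univ_of_deriv
  · exact continuous_iff_continuousAt.2 fun x => (phiF_hasDerivAt x).continuousAt
  · rw [phiF_deriv]
    intro x y hxy
    exact psiF_strictMonoOn (Set.mem_Ioi.2 (Real.exp_pos x)) (Set.mem_Ioi.2 (Real.exp_pos y))
      (Real.exp_lt_exp.2 hxy)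

lemma phiF_strictMono : StrictMono phiF := by
  apply strictMono_of_deriv_pos
  intro x
  rw [phiF_deriv]
  unfold psiF
  have := sinh_exp_pos x
  have h2 := Real.cosh_pos (x := Real.exp x)
  positivity

lemma mid_le (x y : ℝ) : phiF ((x+y)/2) ≤ (phiF x + phiF y)/2 := by
  rcases eq_or_ne x y with rfl | h
  · have : (x+x)/2 = x := by ring
    rw [this]; linarith
  · have := phiF_strictConvex.2 (mem_univ x) (mem_univ y) h
      (by norm_num : (0:ℝ) < 1/2) (by norm_num : (0:ℝ) < 1/2) (by norm_num)
    simp only [smul_eq_mul] at this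
    have he : (1:ℝ)/2 * x + 1/2 * y = (x+y)/2 := by ring
    rw [he] at this
    linarith

lemma mid_lt {x y : ℝ} (h : x ≠ y) : phiF ((x+y)/2) < (phiF x + phiF y)/2 := by
  have := phiF_strictConvex.2 (mem_univ x) (mem_univ y) h
      (by norm_num : (0:ℝ) < 1/2) (by norm_num : (0:ℝ) < 1/2) (by norm_num)
  simp only [smul_eq_mul] at this
  have he : (1:ℝ)/2 * x + 1/2 * y = (x+y)/2 := by ring
  rw [he] at this
  linarith

/-! ### The extremal problem -/

lemma sinh_log_s2 : Real.sinh (Real.log (Real.sqrt 2 + 1)) = 1 := by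
  have h0 : (0:ℝ) < Real.sqrt 2 + 1 := by positivity
  rw [Real.sinh_eq, Real.exp_neg, Real.exp_log h0]
  have h2 : Real.sqrt 2 ^ 2 = 2 := Real.sq_sqrt (by norm_num)
  have h3 : (0:ℝ) ≤ Real.sqrt 2 := Real.sqrt_nonneg 2
  field_simp
  nlinarith [h2]

lemma c_pos : 0 < Real.log (Real.sqrt 2 + 1) := by
  apply Real.log_pos
  nlinarith [Real.sqrt_pos.2 (show (0:ℝ) < 2 by norm_num)]

lemma core (u v : ℝ) (hu : 0 < u) (hv : 0 < v) (h : Real.sinh u * Real.sinh v = 1) :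
    u * v ≤ (Real.log (Real.sqrt 2 + 1))^2 ∧
      (u * v = (Real.log (Real.sqrt 2 + 1))^2 ↔ u = v) := by
  set c := Real.log (Real.sqrt 2 + 1) with hc
  have hcpos := c_pos
  have hsu : 0 < Real.sinh u := Real.sinh_pos_iff.2 hu
  have hsv : 0 < Real.sinh v := Real.sinh_pos_iff.2 hv
  set x := Real.log u with hx
  set y := Real.log v with hy
  set x₀ := Real.log c with hx0
  have hex : Real.exp x = u := Real.exp_log hu
  have hey : Real.exp y = v := Real.exp_log hv
  have hec : Real.exp x₀ = c := Real.exp_log hcpos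
  have hpx : phiF x = Real.log (Real.sinh u) := by unfold phiF; rw [hex]
  have hpy : phiF y = Real.log (Real.sinh v) := by unfold phiF; rw [hey]
  have hpc : phiF x₀ = 0 := by unfold phiF; rw [hec, sinh_log_s2, Real.log_one]
  have hsum : phiF x + phiF y = 0 := by
    rw [hpx, hpy, ← Real.log_mul (ne_of_gt hsu) (ne_of_gt hsv), h, Real.log_one]
  have key : x + y ≤ 2 * x₀ := by
    by_contra hk
    push_neg at hk
    have h1 : phiF x₀ < phiF ((x+y)/2) := phiF_strictMono (by linarith)
    have h2 := mid_le x y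
    linarith
  have huv : u * v = Real.exp (x + y) := by rw [Real.exp_add, hex, hey]
  have hcc : c ^ 2 = Real.exp (2 * x₀) := by
    rw [show 2*x₀ = x₀ + x₀ by ring, Real.exp_add, hec]; ring
  constructor
  · rw [huv, hcc]
    exact Real.exp_le_exp.2 key
  constructor
  · intro heq
    rw [huv, hcc] at heq
    have hxy : x + y = 2 * x₀ := Real.exp_injective heq
    by_contra hne
    have hne' : x ≠ y := fun hxe => hne (by rw [← hex, ← hey, hxe])
    have := mid_lt hne'
    rw [show (x+y)/2 = x₀ by linarith] at this
    linarith
  · rintro rfl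
    have h1 : Real.sinh u = 1 := by nlinarith
    have hu_eq : u = c := Real.sinh_injective (a₁ := u) (a₂ := c)
      (by rw [h1, hc, sinh_log_s2])
    rw [hu_eq]; ring

/-! ### From ratios to the extremal problem -/

lemma sinh_artanh_sqrt {s t : ℝ} (hs : 0 < s) (ht : 0 < t) (hst : s + t = 1) :
    Real.sinh (_root_.artanh (Real.sqrt s)) = Real.sqrt s / Real.sqrt t := by
  set x := Real.sqrt s with hxd
  have hx0 : 0 < x := Real.sqrt_pos.2 hs
  have hx2 : x ^ 2 = s := Real.sq_sqrt hs.le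
  have hx1 : x < 1 := by nlinarith
  have hA : (0:ℝ) < (1 + x) / (1 - x) := by
    apply div_pos <;> linarith
  have e1 : Real.exp (_root_.artanh x) = Real.sqrt ((1 + x) / (1 - x)) := by
    unfold _root_.artanh
    rw [← Real.log_sqrt hA.le, Real.exp_log (Real.sqrt_pos.2 hA)]
  have e2 : Real.exp (-(_root_.artanh x)) = Real.sqrt ((1 - x) / (1 + x)) := by
    rw [Real.exp_neg, e1, ← Real.sqrt_inv]
    congr 1
    rw [inv_div]
  rw [Real.sinh_eq, e1, e2]
  rw [Real.sqrt_div (by linarith : (0:ℝ) ≤ 1 + x), Real.sqrt_div (by linarith : (0:ℝ) ≤ 1 - x)]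
  have hp : 0 < Real.sqrt (1 + x) := Real.sqrt_pos.2 (by linarith)
  have hm : 0 < Real.sqrt (1 - x) := Real.sqrt_pos.2 (by linarith)
  have hpm : Real.sqrt (1 + x) * Real.sqrt (1 - x) = Real.sqrt t := by
    rw [← Real.sqrt_mul (by linarith)]
    congr 1
    nlinarith
  have hp2 : Real.sqrt (1 + x) ^ 2 = 1 + x := Real.sq_sqrt (by linarith)
  have hm2 : Real.sqrt (1 - x) ^ 2 = 1 - x := Real.sq_sqrt (by linarith)
  have htp : 0 < Real.sqrt t := Real.sqrt_pos.2 ht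
  rw [div_sub_div _ _ (ne_of_gt hm) (ne_of_gt hp)]
  have hden : Real.sqrt (1 - x) * Real.sqrt (1 + x) = Real.sqrt t := by
    rw [mul_comm]; exact hpm
  have hnum : Real.sqrt (1 + x) * Real.sqrt (1 + x) - Real.sqrt (1 - x) * Real.sqrt (1 - x)
      = 2 * x := by nlinarith [hp2, hm2]
  rw [hden, hnum]
  field_simp

lemma artanh_pos {x : ℝ} (h0 : 0 < x) (h1 : x < 1) : 0 < _root_.artanh x := by
  unfold _root_.artanh
  have : (1:ℝ) < (1 + x) / (1 - x) := by
    rw [lt_div_iff₀ (by linarith)]; linarith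
  have := Real.log_pos this
  linarith

lemma main_core {r1 r2 : ℝ} (h1 : 0 < r1) (h2 : 0 < r2) (h12 : r1 + r2 = 1) :
    (2 * _root_.artanh (Real.sqrt r1)) * (2 * _root_.artanh (Real.sqrt r2))
      ≤ (2 * Real.log (Real.sqrt 2 + 1))^2 ∧
    ((2 * _root_.artanh (Real.sqrt r1)) * (2 * _root_.artanh (Real.sqrt r2))
      = (2 * Real.log (Real.sqrt 2 + 1))^2 ↔ r1 = 1/2) := by
  set u := _root_.artanh (Real.sqrt r1) with hud
  set v := _root_.artanh (Real.sqrt r2) with hvd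
  have hr1lt : r1 < 1 := by linarith
  have hr2lt : r2 < 1 := by linarith
  have hs1 : Real.sqrt r1 < 1 := by
    rw [show (1:ℝ) = Real.sqrt 1 from (Real.sqrt_one).symm]
    exact Real.sqrt_lt_sqrt h1.le hr1lt
  have hs2 : Real.sqrt r2 < 1 := by
    rw [show (1:ℝ) = Real.sqrt 1 from (Real.sqrt_one).symm]
    exact Real.sqrt_lt_sqrt h2.le hr2lt
  have hu : 0 < u := artanh_pos (Real.sqrt_pos.2 h1) hs1
  have hv : 0 < v := artanh_pos (Real.sqrt_pos.2 h2) hs2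
  have hsu : Real.sinh u = Real.sqrt r1 / Real.sqrt r2 := sinh_artanh_sqrt h1 h2 h12
  have hsv : Real.sinh v = Real.sqrt r2 / Real.sqrt r1 :=
    sinh_artanh_sqrt h2 h1 (by linarith)
  have hq1 : (0:ℝ) < Real.sqrt r1 := Real.sqrt_pos.2 h1
  have hq2 : (0:ℝ) < Real.sqrt r2 := Real.sqrt_pos.2 h2
  have hprod : Real.sinh u * Real.sinh v = 1 := by
    rw [hsu, hsv]
    field_simp
  obtain ⟨hle, hiff⟩ := core u v hu hv hprod
  have hrw : (2*u) * (2*v) = 4 * (u*v) := by ring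
  have hrw2 : (2 * Real.log (Real.sqrt 2 + 1))^2 = 4 * (Real.log (Real.sqrt 2 + 1))^2 := by ring
  constructor
  · rw [hrw, hrw2]; linarith
  · rw [hrw, hrw2]
    constructor
    · intro h
      have huv : u = v := hiff.1 (by linarith)
      have : Real.sinh u = Real.sinh v := by rw [huv]
      rw [hsu, hsv] at this
      have hr : r1 = r2 := by
        field_simp at this
        nlinarith [Real.sq_sqrt h1.le, Real.sq_sqrt h2.le, this, hq1, hq2]
      linarith
    · intro h
      have hr2 : r2 = 1/2 := by linarith
      have : u = v := by rw [hud, hvd, h, hr2]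
      have := hiff.2 this
      linarith

end Aux

/-- The product of the hyperbolic distances between the two pairs of opposite sides
of an ideal hyperbolic quadrilateral is at most `(2 log(√2 + 1))²`, with equality iff
the absolute cross ratio equals `2`. -/
theorem product_of_distances_le (a b c d : ℂ)
    (hord : PosOrderOnCircle a b c d) :
    let d1 := 2 * artanh (Real.sqrt
      ((‖a - b‖ * ‖c - d‖) /
        (‖a - c‖ * ‖b - d‖)))
    let d2 := 2 * artanh (Real.sqrt
      ((‖a - d‖ * ‖b - c‖) /
        (‖a - c‖ * ‖b - d‖)))
    d1 * d2 ≤ (2 * Real.log (Real.sqrt 2 + 1)) ^ 2 ∧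
    (d1 * d2 = (2 * Real.log (Real.sqrt 2 + 1)) ^ 2 ↔
      (‖a - c‖ * ‖b - d‖) /
        (‖a - b‖ * ‖c - d‖) = 2) := by
  obtain ⟨θ₁, θ₂, θ₃, θ₄, h12, h23, h34, h41, ha, hb, hc, hd⟩ := hord
  have hpi := Real.pi_pos
  -- chord lengths
  have hab : ‖a - b‖ = 2 * Real.sin ((θ₂-θ₁)/2) := by
    rw [ha, hb]; exact chordAbs h12 (by linarith)
  have hcd : ‖c - d‖ = 2 * Real.sin ((θ₄-θ₃)/2) := by
    rw [hc, hd]; exact chordAbs h34 (by linarith)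
  have hac : ‖a - c‖ = 2 * Real.sin ((θ₃-θ₁)/2) := by
    rw [ha, hc]; exact chordAbs (by linarith) (by linarith)
  have hbd : ‖b - d‖ = 2 * Real.sin ((θ₄-θ₂)/2) := by
    rw [hb, hd]; exact chordAbs (by linarith) (by linarith)
  have had : ‖a - d‖ = 2 * Real.sin ((θ₄-θ₁)/2) := by
    rw [ha, hd]; exact chordAbs (by linarith) (by linarith)
  have hbc : ‖b - c‖ = 2 * Real.sin ((θ₃-θ₂)/2) := by
    rw [hb, hc]; exact chordAbs (by linarith) (by linarith)
  -- half-angles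
  set x := (θ₂-θ₁)/2 with hxd
  set y := (θ₃-θ₂)/2 with hyd
  set z := (θ₄-θ₃)/2 with hzd
  have hx : 0 < x := by rw [hxd]; linarith
  have hy : 0 < y := by rw [hyd]; linarith
  have hz : 0 < z := by rw [hzd]; linarith
  have hxyz : x + y + z < Real.pi := by rw [hxd, hyd, hzd]; linarith
  have hac' : ‖a - c‖ = 2 * Real.sin (x + y) := by
    rw [hac]; congr 1; rw [hxd, hyd]; ring_nf
  have hbd' : ‖b - d‖ = 2 * Real.sin (y + z) := by
    rw [hbd]; congr 1; rw [hyd, hzd]; ring_nf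
  have had' : ‖a - d‖ = 2 * Real.sin (x + y + z) := by
    rw [had]; congr 1; rw [hxd, hyd, hzd]; ring_nf
  -- positivity of sines
  have hsx : 0 < Real.sin x := Real.sin_pos_of_pos_of_lt_pi hx (by linarith)
  have hsy : 0 < Real.sin y := Real.sin_pos_of_pos_of_lt_pi hy (by linarith)
  have hsz : 0 < Real.sin z := Real.sin_pos_of_pos_of_lt_pi hz (by linarith)
  have hsxy : 0 < Real.sin (x+y) := Real.sin_pos_of_pos_of_lt_pi (by linarith) (by linarith)
  have hsyz : 0 < Real.sin (y+z) := Real.sin_pos_of_pos_of_lt_pi (by linarith) (by linarith)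
  have hsxyz : 0 < Real.sin (x+y+z) := Real.sin_pos_of_pos_of_lt_pi (by linarith) (by linarith)
  -- the two ratios
  set A := ‖a - c‖ * ‖b - d‖ with hA
  set B := ‖a - b‖ * ‖c - d‖ with hB
  set C := ‖a - d‖ * ‖b - c‖ with hC
  have hApos : 0 < A := by rw [hA, hac', hbd']; positivity
  have hBpos : 0 < B := by rw [hB, hab, hcd]; positivity
  have hCpos : 0 < C := by rw [hC, had', hbc]; positivity
  have hptol : B + C = A := by
    rw [hA, hB, hC, hab, hcd, hac', hbd', had', hbc]
    linear_combination (-4 : ℝ) * (ptolemy_sin x y z)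
  have hr1 : 0 < B / A := div_pos hBpos hApos
  have hr2 : 0 < C / A := div_pos hCpos hApos
  have hsum : B / A + C / A = 1 := by
    field_simp
    linarith
  intro d1 d2
  have hmc := main_core hr1 hr2 hsum
  refine ⟨hmc.1, ?_⟩
  rw [hmc.2]
  rw [div_eq_iff (ne_of_gt hApos), div_eq_iff (ne_of_gt hBpos)]
  constructor <;> intro h <;> linarith
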